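/- Let S > 0, ε ∈ [0,1), and let ε₁, ε₂ : [0,S] → ℝ be continuous with |ε₁(τ)| ≤ ε and |ε₂(τ)| ≤ ε for all τ. Suppose f : [0,S] → ℝ is differentiable, f(0) ∈ [0,1], and f'(τ) = (1 + ε₁(τ))(1 − f(τ)) − (1 + ε₂(τ)) f(τ) for all τ ∈ [0,S]. Then f(τ) ∈ [0,1] for all τ ∈ [0,S], and moreover | f(τ) − 1/2 | ≤ (1/2) e^{−2τ} + ε/2 for all τ ∈ [0,S]. -/

import Mathlib

open Set

lemma no_upcross {a b c : ℝ} (f g : ℝ → ℝ)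
    (hf : ∀ t ∈ Set.Icc a b, HasDerivAt f (g t) t)
    (hg : ∀ t ∈ Set.Icc a b, c ≤ f t → g t < 0)
    (h0 : f a ≤ c) : ∀ t ∈ Set.Icc a b, f t ≤ c := by
  by_contra hcon
  push_neg at hcon
  obtain ⟨τ₀, hτ₀, hfτ₀⟩ := hcon
  set A := {t | t ∈ Set.Icc a τ₀ ∧ f t ≤ c} with hA
  have hsub : Set.Icc a τ₀ ⊆ Set.Icc a b := Set.Icc_subset_Icc le_rfl hτ₀.2
  have hcont : ContinuousOn f (Set.Icc a τ₀) := fun t ht =>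
    ((hf t (hsub ht)).continuousAt.continuousWithinAt)
  have hAne : A.Nonempty := ⟨a, ⟨le_rfl, hτ₀.1⟩, h0⟩
  have hAclosed : IsClosed A := by
    have : A = Set.Icc a τ₀ ∩ f ⁻¹' Set.Iic c := by ext t; simp [hA, Set.mem_Icc, and_assoc]
    rw [this]
    exact hcont.preimage_isClosed_of_isClosed isClosed_Icc isClosed_Iic
  have hAcomp : IsCompact A := isCompact_Icc.of_isClosed_subset hAclosed (fun t ht => ht.1)
  set t₀ := sSup A with ht₀def
  have ht₀A : t₀ ∈ A := hAcomp.sSup_mem hAne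
  have ht₀Icc : t₀ ∈ Set.Icc a τ₀ := ht₀A.1
  have ht₀lt : t₀ < τ₀ := lt_of_le_of_ne ht₀Icc.2 (fun h => by
    have := ht₀A.2; rw [h] at this; linarith)
  have hright : ∀ t ∈ Set.Ioc t₀ τ₀, c < f t := by
    intro t ht
    by_contra hle
    push_neg at hle
    have : t ∈ A := ⟨⟨le_trans ht₀Icc.1 ht.1.le, ht.2⟩, hle⟩
    exact absurd (le_csSup hAcomp.bddAbove this) (not_le.mpr ht.1)
  have ht₀b : t₀ ∈ Set.Icc a b := hsub ht₀Icc
  have hfeq : f t₀ = c := by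
    refine le_antisymm ht₀A.2 ?_
    have hcont₀ : Filter.Tendsto f (nhdsWithin t₀ (Set.Ioi t₀)) (nhds (f t₀)) :=
      ((hf t₀ ht₀b).continuousAt.continuousWithinAt)
    refine ge_of_tendsto hcont₀ ?_
    filter_upwards [Ioc_mem_nhdsGT_of_mem ⟨le_rfl, ht₀lt⟩] with t ht
    exact (hright t ht).le
  have hgneg : g t₀ < 0 := hg t₀ ht₀b hfeq.ge
  have hslope : Filter.Tendsto (slope f t₀) (nhdsWithin t₀ (Set.Ioi t₀)) (nhds (g t₀)) :=
    ((hasDerivAt_iff_tendsto_slope.mp (hf t₀ ht₀b)).mono_left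
      (nhdsWithin_mono _ (fun x hx => ne_of_gt hx)))
  have hev : ∀ᶠ t in nhdsWithin t₀ (Set.Ioi t₀), slope f t₀ t < 0 :=
    hslope.eventually (Filter.Tendsto.eventually_lt_const hgneg Filter.tendsto_id)
  have hev2 : ∀ᶠ t in nhdsWithin t₀ (Set.Ioi t₀), t ∈ Set.Ioc t₀ τ₀ :=
    Ioc_mem_nhdsGT_of_mem ⟨le_rfl, ht₀lt⟩
  obtain ⟨t, h1, h2⟩ := (hev.and hev2).exists
  have htpos : 0 < t - t₀ := sub_pos.mpr h2.1
  have : f t - f t₀ < 0 := by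
    have h1' : (t - t₀)⁻¹ * (f t - f t₀) < 0 := by simpa [slope] using h1
    by_contra hcc
    push_neg at hcc
    have := mul_nonneg (inv_pos.mpr htpos).le hcc
    linarith
  have := hright t h2
  linarith [hfeq ▸ this]

/-- Core estimate for the turnpike theorem: the solution of
`f' = (1+ε₁)(1−f) − (1+ε₂)f` with `f(0) ∈ [0,1]` stays in `[0,1]` and satisfies
`|f(τ) − 1/2| ≤ (1/2)e^{−2τ} + ε/2`. -/
theorem stmt_11 (S ε : ℝ) (hS : 0 < S) (hε : ε ∈ Set.Ico (0 : ℝ) 1)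
    (ε₁ ε₂ : ℝ → ℝ)
    (hc₁ : ContinuousOn ε₁ (Set.Icc 0 S)) (hc₂ : ContinuousOn ε₂ (Set.Icc 0 S))
    (hb₁ : ∀ τ ∈ Set.Icc (0 : ℝ) S, |ε₁ τ| ≤ ε)
    (hb₂ : ∀ τ ∈ Set.Icc (0 : ℝ) S, |ε₂ τ| ≤ ε)
    (f : ℝ → ℝ) (hf0 : f 0 ∈ Set.Icc (0 : ℝ) 1)
    (hf : ∀ τ ∈ Set.Icc (0 : ℝ) S,
      HasDerivAt f ((1 + ε₁ τ) * (1 - f τ) - (1 + ε₂ τ) * f τ) τ) :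
    ∀ τ ∈ Set.Icc (0 : ℝ) S,
      f τ ∈ Set.Icc (0 : ℝ) 1 ∧
      |f τ - 1 / 2| ≤ (1 / 2) * Real.exp (-2 * τ) + ε / 2 := by
  obtain ⟨hε0, hε1⟩ := hε
  -- invariance: f ≤ 1
  have hup : ∀ t ∈ Set.Icc (0:ℝ) S, f t ≤ 1 := by
    refine no_upcross f _ hf ?_ hf0.2
    intro t ht h1
    have e1 := abs_le.mp (hb₁ t ht)
    have e2 := abs_le.mp (hb₂ t ht)
    nlinarith [mul_nonneg (by linarith : (0:ℝ) ≤ 1 + ε₁ t) (by linarith : (0:ℝ) ≤ f t - 1)]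
  -- invariance: 0 ≤ f
  have hlow : ∀ t ∈ Set.Icc (0:ℝ) S, 0 ≤ f t := by
    have H := no_upcross (c := 0) (fun t => -f t)
      (fun t => -((1 + ε₁ t) * (1 - f t) - (1 + ε₂ t) * f t))
      (fun t ht => (hf t ht).neg)
      (by
        intro t ht h1
        have hft : f t ≤ 0 := by simpa using h1
        have e1 := abs_le.mp (hb₁ t ht)
        have e2 := abs_le.mp (hb₂ t ht)
        have : 0 < (1 + ε₁ t) * (1 - f t) - (1 + ε₂ t) * f t := by
          nlinarith [mul_nonneg (by linarith : (0:ℝ) ≤ 1 + ε₂ t)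
            (by linarith : (0:ℝ) ≤ -f t)]
        simpa using this)
      (by simpa using hf0.1)
    intro t ht
    simpa using H t ht
  -- auxiliary monotone quantities
  have hderiv : ∀ (c : ℝ), ∀ t ∈ Set.Icc (0:ℝ) S,
      HasDerivAt (fun t => Real.exp (2*t) * (f t - 1/2 + c))
        (Real.exp (2*t) * (2 * (f t - 1/2 + c) +
          ((1 + ε₁ t) * (1 - f t) - (1 + ε₂ t) * f t))) t := by
    intro c t ht
    have he : HasDerivAt (fun t => Real.exp (2*t)) (Real.exp (2*t) * 2) t := by
      simpa using (((hasDerivAt_id t).const_mul 2).exp)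
    have := he.mul (((hf t ht).sub_const (1/2)).add_const c)
    exact this.congr_deriv (by ring)
  have hcont : ∀ (c : ℝ), ContinuousOn (fun t => Real.exp (2*t) * (f t - 1/2 + c))
      (Set.Icc (0:ℝ) S) := fun c t ht => ((hderiv c t ht).continuousAt.continuousWithinAt)
  have key : ∀ t ∈ Set.Icc (0:ℝ) S, ∀ x ∈ Set.Icc (0:ℝ) 1,
      f t = x → True := fun _ _ _ _ _ => trivial
  -- h₁ antitone
  have hanti : AntitoneOn (fun t => Real.exp (2*t) * (f t - 1/2 + (-(ε/2)))) (Set.Icc 0 S) := by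
    apply antitoneOn_of_deriv_nonpos (convex_Icc 0 S) (hcont _)
    · intro t ht
      rw [interior_Icc] at ht
      exact ((hderiv _ t (Ioo_subset_Icc_self ht)).differentiableAt).differentiableWithinAt
    · intro t ht
      rw [interior_Icc] at ht
      have ht' := Ioo_subset_Icc_self ht
      rw [(hderiv _ t ht').deriv]
      have e1 := abs_le.mp (hb₁ t ht')
      have e2 := abs_le.mp (hb₂ t ht')
      have hf0' := hlow t ht'
      have hf1' := hup t ht'
      have hexp : (0:ℝ) < Real.exp (2*t) := Real.exp_pos _
      have hin : 2 * (f t - 1/2 + (-(ε/2))) +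
          ((1 + ε₁ t) * (1 - f t) - (1 + ε₂ t) * f t) ≤ 0 := by
        nlinarith [mul_le_mul_of_nonneg_right e1.2 (by linarith : (0:ℝ) ≤ 1 - f t),
          mul_le_mul_of_nonneg_right e2.1 hf0']
      exact mul_nonpos_of_nonneg_of_nonpos hexp.le hin
  -- h₂ monotone
  have hmono : MonotoneOn (fun t => Real.exp (2*t) * (f t - 1/2 + ε/2)) (Set.Icc 0 S) := by
    apply monotoneOn_of_deriv_nonneg (convex_Icc 0 S) (hcont _)
    · intro t ht
      rw [interior_Icc] at ht
      exact ((hderiv _ t (Ioo_subset_Icc_self ht)).differentiableAt).differentiableWithinAt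
    · intro t ht
      rw [interior_Icc] at ht
      have ht' := Ioo_subset_Icc_self ht
      rw [(hderiv _ t ht').deriv]
      have e1 := abs_le.mp (hb₁ t ht')
      have e2 := abs_le.mp (hb₂ t ht')
      have hf0' := hlow t ht'
      have hf1' := hup t ht'
      have hexp : (0:ℝ) < Real.exp (2*t) := Real.exp_pos _
      have hin : 0 ≤ 2 * (f t - 1/2 + ε/2) +
          ((1 + ε₁ t) * (1 - f t) - (1 + ε₂ t) * f t) := by
        nlinarith [mul_le_mul_of_nonneg_right e1.1 (by linarith : (0:ℝ) ≤ 1 - f t),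
          mul_le_mul_of_nonneg_right e2.2 hf0']
      exact mul_nonneg hexp.le hin
  intro τ hτ
  have h0S : (0:ℝ) ∈ Set.Icc (0:ℝ) S := ⟨le_rfl, hS.le⟩
  refine ⟨⟨hlow τ hτ, hup τ hτ⟩, ?_⟩
  have hE : (0:ℝ) < Real.exp (2*τ) := Real.exp_pos _
  have hE' : (0:ℝ) < Real.exp (-2*τ) := Real.exp_pos _
  have hEE' : Real.exp (-2*τ) * Real.exp (2*τ) = 1 := by
    rw [← Real.exp_add]; ring_nf; exact Real.exp_zero
  have ha := hanti h0S hτ hτ.1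
  have hm := hmono h0S hτ hτ.1
  simp only [mul_zero, Real.exp_zero, one_mul] at ha hm
  have hf00 := hf0.1
  have hf01 := hf0.2
  rw [abs_le]
  constructor
  · nlinarith [mul_le_mul_of_nonneg_left hm hE'.le]
  · nlinarith [mul_le_mul_of_nonneg_left ha hE'.le]
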